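/- arXiv:2106.06779 — 5 statements merged into one kernel-verified Lean document; each statement's English description precedes it below -/
import Mathlib

section
/- Let X and Y be independent real-valued random variables on a probability space, each almost surely strictly positive, with probability density functions f and g respectively (each supported on [0,∞)). Then the ratio X / (X + Y) has probability density function p ↦ ∫₀^∞ z · f(z p) · g(z (1 − p)) dz on [0,1] with respect to Lebesgue measure. -/
open MeasureTheory ProbabilityTheory Set
open scoped ENNReal

lemma hasFDerivAt_phi (q : ℝ × ℝ) :
    HasFDerivAt (fun q : ℝ × ℝ => (q.1 * q.2, q.1 * (1 - q.2)))
      (LinearMap.toContinuousLinearMap (Matrix.toLin (Module.Basis.finTwoProd ℝ) (Module.Basis.finTwoProd ℝ)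
        !![q.2, q.1; 1 - q.2, -q.1])) q := by
  have h1 : HasFDerivAt (fun q : ℝ × ℝ => q.1 * q.2)
      (q.1 • ContinuousLinearMap.snd ℝ ℝ ℝ + q.2 • ContinuousLinearMap.fst ℝ ℝ ℝ) q :=
    (hasFDerivAt_fst (p := q)).mul (hasFDerivAt_snd (p := q))
  have h2 : HasFDerivAt (fun q : ℝ × ℝ => q.1 * (1 - q.2))
      (q.1 • -(ContinuousLinearMap.snd ℝ ℝ ℝ) + (1 - q.2) • ContinuousLinearMap.fst ℝ ℝ ℝ) q :=
    (hasFDerivAt_fst (p := q)).mul ((hasFDerivAt_snd (p := q)).const_sub 1)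
  refine (h1.prodMk h2).congr_fderiv ?_
  rw [Matrix.toLin_finTwoProd_toContinuousLinearMap]
  ext v <;> simp <;> ring

lemma prod_withDensity' (f g : ℝ → ℝ≥0∞) (hf : Measurable f) (hg : Measurable g)
    [SigmaFinite (volume.withDensity f)] [SigmaFinite (volume.withDensity g)] :
    (volume.withDensity f).prod (volume.withDensity g)
      = (volume : Measure (ℝ × ℝ)).withDensity (fun q => f q.1 * g q.2) := by
  refine Measure.prod_eq fun s t hs ht => ?_
  rw [Measure.volume_eq_prod, withDensity_apply _ (hs.prod ht), ← Measure.prod_restrict,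
    lintegral_prod_mul hf.aemeasurable hg.aemeasurable,
    withDensity_apply _ hs, withDensity_apply _ ht]

lemma det_B (q : ℝ × ℝ) :
    (LinearMap.toContinuousLinearMap (Matrix.toLin (Module.Basis.finTwoProd ℝ) (Module.Basis.finTwoProd ℝ)
        !![q.2, q.1; 1 - q.2, -q.1])).det = -q.1 := by
  simp [LinearMap.det_toContinuousLinearMap, LinearMap.det_toLin, Matrix.det_fin_two_of]
  ring

lemma phi_image (s : Set ℝ) :
    (fun q : ℝ × ℝ => (q.1 * q.2, q.1 * (1 - q.2))) '' (Ioi 0 ×ˢ (Ioo 0 1 ∩ s))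
      = ((fun q : ℝ × ℝ => q.1 / (q.1 + q.2)) ⁻¹' s) ∩ (Ioi 0 ×ˢ Ioi 0) := by
  ext ⟨x, y⟩
  constructor
  · rintro ⟨⟨z, p⟩, ⟨hz, hp, hps⟩, heq⟩
    simp only [Prod.mk.injEq] at heq
    obtain ⟨hx, hy⟩ := heq
    simp only [mem_Ioi, mem_Ioo] at hz hp
    have hx' : 0 < x := hx ▸ mul_pos hz hp.1
    have hy' : 0 < y := hy ▸ mul_pos hz (by linarith)
    refine ⟨?_, hx', hy'⟩
    have : x / (x + y) = p := by
      subst hx hy; field_simp; ring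
    simpa [Set.mem_preimage, this]
  · rintro ⟨hs, hx, hy⟩
    simp only [mem_Ioi] at hx hy
    refine ⟨(x + y, x / (x + y)), ⟨?_, ?_, hs⟩, ?_⟩
    · exact add_pos hx hy
    · constructor
      · exact div_pos hx (by linarith)
      · rw [div_lt_one (by linarith)]; linarith
    · have hxy : x + y ≠ 0 := by positivity
      simp only [Prod.mk.injEq]
      constructor
      · field_simp
      · field_simp <;> ring

lemma phi_injOn (s : Set ℝ) :
    Set.InjOn (fun q : ℝ × ℝ => (q.1 * q.2, q.1 * (1 - q.2))) (Ioi 0 ×ˢ (Ioo 0 1 ∩ s)) := by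
  rintro ⟨z1, p1⟩ ⟨hz1, _⟩ ⟨z2, p2⟩ ⟨hz2, _⟩ heq
  simp only [Prod.mk.injEq] at heq ⊢
  simp only [mem_Ioi] at hz1 hz2
  have hz : z1 = z2 := by nlinarith [heq.1, heq.2]
  refine ⟨hz, ?_⟩
  subst hz
  have := heq.1
  exact mul_left_cancel₀ (ne_of_gt hz1) this

lemma core_map (f g : ℝ → ℝ) (hf : Measurable f) (hg : Measurable g)
    (hfnonneg : ∀ x, 0 ≤ f x) (hgnonneg : ∀ x, 0 ≤ g x)
    (hfzero : ∀ x < 0, f x = 0) (hgzero : ∀ x < 0, g x = 0) :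
    ((volume : Measure (ℝ × ℝ)).withDensity
        (fun q => ENNReal.ofReal (f q.1) * ENNReal.ofReal (g q.2))).map
      (fun q : ℝ × ℝ => q.1 / (q.1 + q.2))
      = volume.withDensity ((Ioo (0:ℝ) 1).indicator
          (fun p => ∫⁻ z in Ioi (0:ℝ), ENNReal.ofReal (z * f (z * p) * g (z * (1 - p))))) := by
  have hT : Measurable (fun q : ℝ × ℝ => q.1 / (q.1 + q.2)) :=
    measurable_fst.div (measurable_fst.add measurable_snd)
  have hF : Measurable (fun q : ℝ × ℝ => ENNReal.ofReal (f q.1) * ENNReal.ofReal (g q.2)) :=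
    (hf.comp measurable_fst).ennreal_ofReal.mul (hg.comp measurable_snd).ennreal_ofReal
  have hk : Measurable (fun q : ℝ × ℝ =>
      ENNReal.ofReal (q.1 * f (q.1 * q.2) * g (q.1 * (1 - q.2)))) :=
    ((measurable_fst.mul (hf.comp (measurable_fst.mul measurable_snd))).mul
      (hg.comp (measurable_fst.mul (measurable_const.sub measurable_snd)))).ennreal_ofReal
  have hA : MeasurableSet (Ioi (0:ℝ) ×ˢ Ioi (0:ℝ)) := measurableSet_Ioi.prod measurableSet_Ioi
  have hN : (volume : Measure (ℝ × ℝ))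
      (({(0:ℝ)} ×ˢ (univ : Set ℝ)) ∪ ((univ : Set ℝ) ×ˢ {(0:ℝ)})) = 0 := by
    rw [Measure.volume_eq_prod]
    apply measure_union_null <;> rw [Measure.prod_prod] <;> simp
  ext s hs
  have hS : MeasurableSet (Ioi (0:ℝ) ×ˢ (Ioo (0:ℝ) 1 ∩ s)) :=
    measurableSet_Ioi.prod (measurableSet_Ioo.inter hs)
  rw [Measure.map_apply hT hs, withDensity_apply _ (hT hs), withDensity_apply _ hs]
  have hae : (fun q : ℝ × ℝ => ENNReal.ofReal (f q.1) * ENNReal.ofReal (g q.2))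
      =ᵐ[(volume : Measure (ℝ × ℝ)).restrict ((fun q : ℝ × ℝ => q.1 / (q.1 + q.2)) ⁻¹' s)]
      (Ioi 0 ×ˢ Ioi 0).indicator
        (fun q => ENNReal.ofReal (f q.1) * ENNReal.ofReal (g q.2)) := by
    refine ae_restrict_of_ae ?_
    have h0 : ∀ᵐ q : ℝ × ℝ ∂volume,
        q ∉ (({(0:ℝ)} ×ˢ (univ : Set ℝ)) ∪ ((univ : Set ℝ) ×ˢ {(0:ℝ)})) :=
      (measure_eq_zero_iff_ae_notMem).mp hN
    filter_upwards [h0] with q hq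
    by_cases hqA : q ∈ Ioi (0:ℝ) ×ˢ Ioi (0:ℝ)
    · rw [Set.indicator_of_mem hqA]
    · rw [Set.indicator_of_notMem hqA]
      simp only [Set.mem_union, Set.mem_prod, Set.mem_singleton_iff, Set.mem_univ,
        not_or, not_and, and_true, true_and] at hq
      simp only [Set.mem_prod, mem_Ioi, not_and_or, not_lt] at hqA
      rcases hqA with h1 | h2
      · have : q.1 < 0 := lt_of_le_of_ne h1 hq.1
        rw [hfzero _ this]; simp
      · have : q.2 < 0 := lt_of_le_of_ne h2 hq.2
        rw [hgzero _ this]; simp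
  rw [lintegral_congr_ae hae, lintegral_indicator hA _, Measure.restrict_restrict hA,
    Set.inter_comm, ← phi_image s,
    lintegral_image_eq_lintegral_abs_det_fderiv_mul volume hS
      (fun q _ => (hasFDerivAt_phi q).hasFDerivWithinAt) (phi_injOn s)]
  have hcongr : ∀ q ∈ Ioi (0:ℝ) ×ˢ (Ioo (0:ℝ) 1 ∩ s),
      ENNReal.ofReal |(LinearMap.toContinuousLinearMap (Matrix.toLin (Module.Basis.finTwoProd ℝ)
          (Module.Basis.finTwoProd ℝ) !![q.2, q.1; 1 - q.2, -q.1])).det| *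
        (ENNReal.ofReal (f (q.1 * q.2)) * ENNReal.ofReal (g (q.1 * (1 - q.2))))
      = ENNReal.ofReal (q.1 * f (q.1 * q.2) * g (q.1 * (1 - q.2))) := by
    rintro ⟨z, p⟩ ⟨hz, _⟩
    simp only [mem_Ioi] at hz
    rw [det_B, abs_neg, abs_of_pos hz,
      ENNReal.ofReal_mul (mul_nonneg hz.le (hfnonneg _)), ENNReal.ofReal_mul hz.le, mul_assoc]
  rw [setLIntegral_congr_fun hS hcongr]
  rw [Measure.volume_eq_prod, ← Measure.prod_restrict, lintegral_prod_symm' _ hk]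
  rw [lintegral_indicator measurableSet_Ioo, Measure.restrict_restrict measurableSet_Ioo]


/-- for independent a.s. positive `X`, `Y` with densities `f`, `g` supported
on `[0,∞)`, the ratio `X / (X + Y)` has density `p ↦ ∫₀^∞ z f(z p) g(z (1 - p)) dz`. -/
theorem density_ratio
    {Ω : Type*} [MeasurableSpace Ω] (P : Measure Ω) [IsProbabilityMeasure P]
    (X Y : Ω → ℝ) (hX : Measurable X) (hY : Measurable Y)
    (hindep : IndepFun X Y P)
    (hXpos : ∀ᵐ ω ∂P, 0 < X ω) (hYpos : ∀ᵐ ω ∂P, 0 < Y ω)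
    (f g : ℝ → ℝ) (hf : Measurable f) (hg : Measurable g)
    (hfnonneg : ∀ x, 0 ≤ f x) (hgnonneg : ∀ x, 0 ≤ g x)
    (hfzero : ∀ x < 0, f x = 0) (hgzero : ∀ x < 0, g x = 0)
    (hXpdf : P.map X = volume.withDensity (fun x => ENNReal.ofReal (f x)))
    (hYpdf : P.map Y = volume.withDensity (fun x => ENNReal.ofReal (g x))) :
    P.map (fun ω => X ω / (X ω + Y ω)) =
      volume.withDensity (fun p => ENNReal.ofReal
        (∫ z in Set.Ioi (0 : ℝ), z * f (z * p) * g (z * (1 - p)))) := by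
  have hT : Measurable (fun q : ℝ × ℝ => q.1 / (q.1 + q.2)) :=
    measurable_fst.div (measurable_fst.add measurable_snd)
  haveI hPX : IsProbabilityMeasure (volume.withDensity fun x => ENNReal.ofReal (f x)) := by
    rw [← hXpdf]; exact Measure.isProbabilityMeasure_map hX.aemeasurable
  haveI hPY : IsProbabilityMeasure (volume.withDensity fun x => ENNReal.ofReal (g x)) := by
    rw [← hYpdf]; exact Measure.isProbabilityMeasure_map hY.aemeasurable
  haveI : IsProbabilityMeasure (P.map (fun ω => X ω / (X ω + Y ω))) :=
    Measure.isProbabilityMeasure_map (hX.div (hX.add hY)).aemeasurable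
  have hjoint : P.map (fun ω => (X ω, Y ω)) =
      (volume : Measure (ℝ × ℝ)).withDensity
        (fun q => ENNReal.ofReal (f q.1) * ENNReal.ofReal (g q.2)) := by
    rw [(indepFun_iff_map_prod_eq_prod_map_map hX.aemeasurable hY.aemeasurable).1 hindep,
      hXpdf, hYpdf, prod_withDensity' _ _ hf.ennreal_ofReal hg.ennreal_ofReal]
  set H : ℝ → ℝ≥0∞ :=
    fun p => ∫⁻ z in Ioi (0:ℝ), ENNReal.ofReal (z * f (z * p) * g (z * (1 - p))) with hHdef
  have hmap : P.map (fun ω => X ω / (X ω + Y ω)) =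
      volume.withDensity ((Ioo (0:ℝ) 1).indicator H) := by
    rw [← core_map f g hf hg hfnonneg hgnonneg hfzero hgzero, ← hjoint,
      Measure.map_map hT (hX.prodMk hY)]
    rfl
  have hHmeas : Measurable H := by
    apply Measurable.lintegral_prod_right'
      (f := fun q : ℝ × ℝ => ENNReal.ofReal (q.2 * f (q.2 * q.1) * g (q.2 * (1 - q.1))))
    exact ((measurable_snd.mul (hf.comp (measurable_snd.mul measurable_fst))).mul
      (hg.comp (measurable_snd.mul (measurable_const.sub measurable_fst)))).ennreal_ofReal
  have hfin : ∀ᵐ p ∂(volume : Measure ℝ), (Ioo (0:ℝ) 1).indicator H p < ⊤ := by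
    apply ae_lt_top (hHmeas.indicator measurableSet_Ioo)
    have h1 : (volume.withDensity ((Ioo (0:ℝ) 1).indicator H)) univ = 1 := by
      rw [← hmap]; exact measure_univ
    rw [withDensity_apply _ MeasurableSet.univ, Measure.restrict_univ] at h1
    rw [h1]; exact ENNReal.one_ne_top
  have h0 : ∀ᵐ p : ℝ ∂volume, p ≠ 0 := by
    rw [ae_iff]; simpa using measure_singleton (0:ℝ)
  have h1 : ∀ᵐ p : ℝ ∂volume, p ≠ 1 := by
    rw [ae_iff]; simpa using measure_singleton (1:ℝ)
  rw [hmap]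
  refine withDensity_congr_ae ?_
  filter_upwards [hfin, h0, h1] with p hp hp0 hp1
  by_cases hmem : p ∈ Ioo (0:ℝ) 1
  · rw [Set.indicator_of_mem hmem] at hp ⊢
    have hφmeas : Measurable (fun z => z * f (z * p) * g (z * (1 - p))) :=
      (measurable_id.mul (hf.comp (measurable_id.mul_const p))).mul
        (hg.comp (measurable_id.mul_const (1 - p)))
    have hφnn : 0 ≤ᵐ[volume.restrict (Ioi (0:ℝ))] fun z => z * f (z * p) * g (z * (1 - p)) := by
      refine (ae_restrict_iff' measurableSet_Ioi).mpr
        (Filter.Eventually.of_forall fun z hz => ?_)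
      exact mul_nonneg (mul_nonneg (le_of_lt hz) (hfnonneg _)) (hgnonneg _)
    have hint : Integrable (fun z => z * f (z * p) * g (z * (1 - p)))
        (volume.restrict (Ioi (0:ℝ))) :=
      ⟨hφmeas.aestronglyMeasurable, (hasFiniteIntegral_iff_ofReal hφnn).2 hp⟩
    rw [ofReal_integral_eq_lintegral_ofReal hint hφnn]
  · rw [Set.indicator_of_notMem hmem]
    have hcase : p < 0 ∨ 1 < p := by
      simp only [mem_Ioo, not_and_or, not_lt] at hmem
      rcases hmem with h | h
      · exact Or.inl (lt_of_le_of_ne h hp0)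
      · exact Or.inr (lt_of_le_of_ne h (Ne.symm hp1))
    have hzero : EqOn (fun z => z * f (z * p) * g (z * (1 - p))) (fun _ => (0:ℝ))
        (Ioi (0:ℝ)) := by
      intro z hz
      simp only [mem_Ioi] at hz
      rcases hcase with h | h
      · have : z * p < 0 := mul_neg_of_pos_of_neg hz h
        simp [hfzero _ this]
      · have : z * (1 - p) < 0 := mul_neg_of_pos_of_neg hz (by linarith)
        simp [hgzero _ this]
    rw [setIntegral_congr_fun measurableSet_Ioi hzero]
    simp
end

section
/- Let n ≥ 2, λ > 0, and α₁, …, αₙ > 0 with α = α₁ + ⋯ + αₙ. For every (p₁, …, p_{n−1}) with each pᵢ > 0 and p₁ + ⋯ + p_{n−1} < 1, setting p_n = 1 − (p₁ + ⋯ + p_{n−1}), the integral identity ∫₀^∞ z^{n−1} ∏_{i=1}^{n} γ_{α_i,λ}(z p_i) dz = Γ(α) ∏_{i=1}^{n} (p_i^{α_i−1} / Γ(α_i)) holds; the right-hand side is the density of the Dirichlet distribution D(α₁, …, αₙ). -/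
open MeasureTheory Real

/-- The gamma density with shape `α > 0` and rate `λ > 0`:
`γ_{α,λ}(x) = (λ^α / Γ(α)) x^{α-1} e^{-λ x}` for `x ≥ 0`, and `0` for `x < 0`. -/
noncomputable def gammaDensity (α lam : ℝ) (x : ℝ) : ℝ :=
  if x < 0 then 0 else lam ^ α / Real.Gamma α * x ^ (α - 1) * Real.exp (-lam * x)

/-- with gamma conditioning densities of common rate `λ`,
`∫₀^∞ z^{n-1} ∏ᵢ γ_{αᵢ,λ}(z pᵢ) dz = Γ(α) ∏ᵢ pᵢ^{αᵢ-1} / Γ(αᵢ)`, the Dirichlet density,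
where `pₙ = 1 - (p₁ + ⋯ + p_{n-1})` and `α = Σᵢ αᵢ`. -/
theorem gammaDensity_integral_eq_dirichletDensity
    (n : ℕ) (hn : 2 ≤ n) (lam : ℝ) (hlam : 0 < lam)
    (α : Fin n → ℝ) (hα : ∀ i, 0 < α i)
    (p : Fin (n - 1) → ℝ) (hp : ∀ i, 0 < p i) (hpsum : ∑ i, p i < 1) :
    ∫ z in Set.Ioi (0 : ℝ), z ^ (n - 1) *
        ∏ i : Fin n, gammaDensity (α i) lam
          (z * (if h : (i : ℕ) < n - 1 then p ⟨i, h⟩ else 1 - ∑ j, p j)) =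
      Real.Gamma (∑ i, α i) *
        ∏ i : Fin n, ((if h : (i : ℕ) < n - 1 then p ⟨i, h⟩ else 1 - ∑ j, p j) ^ (α i - 1) /
          Real.Gamma (α i)) := by
  obtain ⟨m, rfl⟩ : ∃ m, n = m + 1 := ⟨n - 1, (Nat.succ_pred_eq_of_pos (by omega)).symm⟩
  set q : Fin (m + 1) → ℝ := fun i =>
    if h : (i : ℕ) < m + 1 - 1 then p ⟨i, h⟩ else 1 - ∑ j, p j with hq
  have hqpos : ∀ i, 0 < q i := by
    intro i
    simp only [hq]
    split
    · exact hp _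
    · linarith
  have hps : ∑ j : Fin (m+1-1), p j = ∑ j : Fin m, p ⟨j, by omega⟩ := rfl
  have hqsum : ∑ i, q i = 1 := by
    rw [Fin.sum_univ_castSucc]
    have h1 : ∀ j : Fin m, q (Fin.castSucc j) = p ⟨j, by omega⟩ := by
      intro j
      simp only [hq, Fin.coe_castSucc]
      rw [dif_pos (by omega)]
    have h2 : q (Fin.last m) = 1 - ∑ j, p j := by
      simp only [hq, Fin.val_last]
      rw [dif_neg (by omega)]
    rw [h2, Finset.sum_congr rfl fun j _ => h1 j, ← hps]
    ring
  set A := ∑ i, α i with hA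
  have hApos : 0 < A := Finset.sum_pos (fun i _ => hα i) ⟨0, Finset.mem_univ 0⟩
  set C : ℝ := ∏ i : Fin (m+1), (lam ^ (α i) / Real.Gamma (α i) * (q i) ^ (α i - 1)) with hC
  have key : ∀ z ∈ Set.Ioi (0 : ℝ),
      z ^ (m + 1 - 1) * ∏ i : Fin (m+1), gammaDensity (α i) lam (z * q i) =
      C * (z ^ (A - 1) * Real.exp (-(lam * z))) := by
    intro z hz
    have hz0 : 0 < z := hz
    have hprod : ∀ i : Fin (m+1), gammaDensity (α i) lam (z * q i) =
        lam ^ (α i) / Real.Gamma (α i) * (q i) ^ (α i - 1) *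
          (z ^ (α i - 1) * Real.exp (-(lam * (q i)) * z)) := by
      intro i
      have hzq : 0 < z * q i := mul_pos hz0 (hqpos i)
      rw [gammaDensity, if_neg (not_lt.mpr hzq.le)]
      rw [Real.mul_rpow hz0.le (hqpos i).le]
      ring_nf
    rw [Finset.prod_congr rfl fun i _ => hprod i, Finset.prod_mul_distrib, ← hC,
      Finset.prod_mul_distrib]
    rw [← Real.exp_sum, ← Real.rpow_sum_of_pos hz0]
    have hsum1 : ∑ i : Fin (m+1), (α i - 1) = A - (m+1) := by
      rw [Finset.sum_sub_distrib]
      simp [hA]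
    have hsum2 : ∑ i : Fin (m+1), -(lam * q i) * z = -(lam * z) := by
      have h : ∀ i, -(lam * q i) * z = q i * (-(lam * z)) := fun i => by ring
      rw [Finset.sum_congr rfl fun i _ => h i, ← Finset.sum_mul, hqsum, one_mul]
    rw [hsum1, hsum2, ← Real.rpow_natCast z (m + 1 - 1)]
    have hm : ((m + 1 - 1 : ℕ) : ℝ) = (m : ℝ) := by norm_num
    rw [hm]
    have hzz : z ^ (m : ℝ) * z ^ (A - (m + 1)) = z ^ (A - 1) := by
      rw [← Real.rpow_add hz0]
      ring_nf
    linear_combination C * Real.exp (-(lam * z)) * hzz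
  rw [setIntegral_congr_fun measurableSet_Ioi key, integral_const_mul,
    integral_rpow_mul_exp_neg_mul_Ioi hApos hlam]
  have hCsplit : C = lam ^ A * ∏ i : Fin (m+1), ((q i) ^ (α i - 1) / Real.Gamma (α i)) := by
    rw [hC]
    have h : ∀ i : Fin (m+1), lam ^ (α i) / Real.Gamma (α i) * (q i) ^ (α i - 1) =
        lam ^ (α i) * ((q i) ^ (α i - 1) / Real.Gamma (α i)) := fun i => by ring
    rw [Finset.prod_congr rfl fun i _ => h i, Finset.prod_mul_distrib,
      ← Real.rpow_sum_of_pos hlam, ← hA]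
  rw [hCsplit]
  have hinv : (1 / lam) ^ A * lam ^ A = 1 := by
    rw [← Real.mul_rpow (by positivity) hlam.le, one_div_mul_cancel hlam.ne', Real.one_rpow]
  set P := ∏ i : Fin (m+1), ((q i) ^ (α i - 1) / Real.Gamma (α i))
  linear_combination Real.Gamma A * P * hinv
end

section
/- For every α > 0 and s ≥ 0, the Laplace transform of the Lévy density f_α is ∫₀^∞ e^{−s x} f_α(x) dx = exp(−α √s). -/
open MeasureTheory Real

open Set

lemma image_sub_div (b : ℝ) (hb : 0 < b) : (fun u : ℝ => u - b/u) '' Ioi 0 = univ := by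
  ext t
  simp only [mem_univ, iff_true, mem_image, mem_Ioi]
  have h1 : |t| < Real.sqrt (t^2 + 4*b) := by
    rw [← Real.sqrt_sq_eq_abs]
    exact Real.sqrt_lt_sqrt (sq_nonneg t) (by linarith)
  have h2 := neg_abs_le t
  have hr : Real.sqrt (t^2 + 4*b) ^ 2 = t^2 + 4*b := Real.sq_sqrt (by positivity)
  set u := (t + Real.sqrt (t^2 + 4*b))/2 with hudef
  have hu : 0 < u := by rw [hudef]; linarith
  refine ⟨u, hu, ?_⟩
  have key : u * u = t * u + b := by rw [hudef]; nlinarith [hr]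
  have : b/u = u - t := by rw [div_eq_iff hu.ne']; nlinarith [key]
  rw [this]; ring

lemma image_div (b : ℝ) (hb : 0 < b) : (fun u : ℝ => b/u) '' Ioi 0 = Ioi 0 := by
  ext y
  simp only [mem_image, mem_Ioi]
  constructor
  · rintro ⟨u, hu, rfl⟩; positivity
  · intro hy; exact ⟨b/y, by positivity, by field_simp⟩

lemma image_sq_inv (α : ℝ) (hα : 0 < α) : (fun u : ℝ => α^2/(4*u^2)) '' Ioi 0 = Ioi 0 := by
  ext y
  simp only [mem_image, mem_Ioi]
  constructor
  · rintro ⟨u, hu, rfl⟩; positivity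
  · intro hy
    refine ⟨α/(2*Real.sqrt y), by positivity, ?_⟩
    have h : Real.sqrt y ^ 2 = y := Real.sq_sqrt hy.le
    have hsy : Real.sqrt y ≠ 0 := by positivity
    rw [div_pow, mul_pow]
    rw [h]
    field_simp
    ring

lemma glasser_aux (b : ℝ) (hb : 0 < b) :
    ∫ u in Ioi (0:ℝ), Real.exp (-(u - b/u)^2) = Real.sqrt Real.pi / 2 := by
  have hderiv1 : ∀ u ∈ Ioi (0:ℝ), HasDerivWithinAt (fun u : ℝ => u - b/u)
      (1 + b/u^2) (Ioi 0) u := by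
    intro u hu
    have hu0 : u ≠ 0 := (mem_Ioi.mp hu).ne'
    have h : HasDerivAt (fun v : ℝ => v - b/v) (1 - b * -(u^2)⁻¹) u := by
      simpa [div_eq_mul_inv, Pi.sub_def] using (hasDerivAt_id u).sub ((hasDerivAt_inv hu0).const_mul b)
    have e : (1 : ℝ) - b * -(u^2)⁻¹ = 1 + b/u^2 := by field_simp; ring
    exact (e ▸ h).hasDerivWithinAt
  have hderiv2 : ∀ u ∈ Ioi (0:ℝ), HasDerivWithinAt (fun u : ℝ => b/u)
      (-(b/u^2)) (Ioi 0) u := by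
    intro u hu
    have hu0 : u ≠ 0 := (mem_Ioi.mp hu).ne'
    have h : HasDerivAt (fun v : ℝ => b/v) (b * -(u^2)⁻¹) u := by
      simpa [div_eq_mul_inv] using (hasDerivAt_inv hu0).const_mul b
    have e : b * -(u^2)⁻¹ = -(b/u^2) := by field_simp
    exact (e ▸ h).hasDerivWithinAt
  have hinj1 : InjOn (fun u : ℝ => u - b/u) (Ioi 0) := by
    intro u hu v hv h
    simp only [mem_Ioi] at hu hv
    simp only at h
    field_simp at h
    have h' : (v - u) * (u*v + b) = 0 := by linear_combination -h
    have hpos : 0 < u*v + b := by positivity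
    rcases mul_eq_zero.mp h' with h'' | h''
    · linarith [sub_eq_zero.mp h'']
    · linarith
  have hinj2 : InjOn (fun u : ℝ => b/u) (Ioi 0) := by
    intro u hu v hv h
    simp only [mem_Ioi] at hu hv
    simp only at h
    rw [div_eq_div_iff hu.ne' hv.ne'] at h
    have := mul_left_cancel₀ hb.ne' h
    linarith
  -- step A
  have stepA : (Real.sqrt Real.pi : ℝ) =
      ∫ u in Ioi (0:ℝ), |1 + b/u^2| * Real.exp (-(u - b/u)^2) := by
    have key := integral_image_eq_integral_abs_deriv_smul (f := fun u : ℝ => u - b/u)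
      (f' := fun u : ℝ => 1 + b/u^2) measurableSet_Ioi hderiv1 hinj1
      (fun t => Real.exp (-t^2))
    rw [image_sub_div b hb] at key
    simp only [smul_eq_mul] at key
    rw [← key, Measure.restrict_univ]
    have hg := integral_gaussian (1:ℝ)
    simp only [neg_mul, one_mul, div_one] at hg
    exact hg.symm
  -- step B
  have stepB : IntegrableOn (fun u : ℝ => |1 + b/u^2| * Real.exp (-(u - b/u)^2)) (Ioi 0) := by
    have key := (integrableOn_image_iff_integrableOn_abs_deriv_smul
      measurableSet_Ioi hderiv1 hinj1 (fun t => Real.exp (-t^2)))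
    rw [image_sub_div b hb] at key
    simp only [smul_eq_mul] at key
    apply key.mp
    rw [integrableOn_univ]
    simpa using integrable_exp_neg_mul_sq one_pos
  -- step C: swap u ↦ b/u
  have stepC : ∫ u in Ioi (0:ℝ), Real.exp (-(u - b/u)^2)
      = ∫ u in Ioi (0:ℝ), (b/u^2) * Real.exp (-(u - b/u)^2) := by
    have key := integral_image_eq_integral_abs_deriv_smul (f := fun u : ℝ => b/u)
      (f' := fun u : ℝ => -(b/u^2)) measurableSet_Ioi hderiv2 hinj2
      (fun x => Real.exp (-(x - b/x)^2))
    rw [image_div b hb] at key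
    simp only [smul_eq_mul] at key
    rw [key]
    apply setIntegral_congr_fun measurableSet_Ioi
    intro u hu
    simp only [mem_Ioi] at hu
    have h1 : b/(b/u) = u := by field_simp
    have h2 : |(-(b/u^2))| = b/u^2 := by
      rw [abs_neg, abs_of_nonneg]; positivity
    simp only [h1, h2]
    congr 1
    ring_nf
  -- measurability
  have hmeas : AEStronglyMeasurable (fun u : ℝ => Real.exp (-(u - b/u)^2))
      (volume.restrict (Ioi 0)) := by
    apply Measurable.aestronglyMeasurable
    exact Real.measurable_exp.comp
      (((measurable_id.sub (measurable_const.div measurable_id)).pow_const 2).neg)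
  have hmeas2 : AEStronglyMeasurable (fun u : ℝ => (b/u^2) * Real.exp (-(u - b/u)^2))
      (volume.restrict (Ioi 0)) := by
    apply Measurable.aestronglyMeasurable
    exact (measurable_const.div (measurable_id.pow_const 2)).mul
      (Real.measurable_exp.comp
        (((measurable_id.sub (measurable_const.div measurable_id)).pow_const 2).neg))
  -- bounds a.e. on Ioi 0
  have hbound1 : ∀ᵐ u ∂(volume.restrict (Ioi (0:ℝ))),
      ‖Real.exp (-(u - b/u)^2)‖ ≤ |1 + b/u^2| * Real.exp (-(u - b/u)^2) := by
    rw [ae_restrict_iff' measurableSet_Ioi]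
    filter_upwards with u hu
    simp only [mem_Ioi] at hu
    have h1 : (0:ℝ) < 1 + b/u^2 := by positivity
    have he := Real.exp_pos (-(u - b/u)^2)
    have h2 : (0:ℝ) < b/u^2 := by positivity
    rw [Real.norm_eq_abs, abs_of_pos he, abs_of_pos h1]
    nlinarith [mul_pos h2 he]
  have hbound2 : ∀ᵐ u ∂(volume.restrict (Ioi (0:ℝ))),
      ‖(b/u^2) * Real.exp (-(u - b/u)^2)‖ ≤ |1 + b/u^2| * Real.exp (-(u - b/u)^2) := by
    rw [ae_restrict_iff' measurableSet_Ioi]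
    filter_upwards with u hu
    simp only [mem_Ioi] at hu
    have h1 : (0:ℝ) < 1 + b/u^2 := by positivity
    have h2 : (0:ℝ) < b/u^2 := by positivity
    have he := Real.exp_pos (-(u - b/u)^2)
    rw [norm_mul, Real.norm_eq_abs, Real.norm_eq_abs, abs_of_pos h2, abs_of_pos he,
      abs_of_pos h1]
    nlinarith
  have hI : IntegrableOn (fun u : ℝ => Real.exp (-(u - b/u)^2)) (Ioi 0) :=
    stepB.mono' hmeas hbound1
  have hK : IntegrableOn (fun u : ℝ => (b/u^2) * Real.exp (-(u - b/u)^2)) (Ioi 0) :=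
    stepB.mono' hmeas2 hbound2
  -- split
  have split : ∫ u in Ioi (0:ℝ), |1 + b/u^2| * Real.exp (-(u - b/u)^2)
      = (∫ u in Ioi (0:ℝ), Real.exp (-(u - b/u)^2))
        + ∫ u in Ioi (0:ℝ), (b/u^2) * Real.exp (-(u - b/u)^2) := by
    rw [← integral_add hI hK]
    apply setIntegral_congr_fun measurableSet_Ioi
    intro u hu
    simp only [mem_Ioi] at hu
    have h1 : (0:ℝ) < 1 + b/u^2 := by positivity
    simp only [abs_of_pos h1]
    ring
  have final : Real.sqrt Real.pi = 2 * ∫ u in Ioi (0:ℝ), Real.exp (-(u - b/u)^2) := by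
    rw [stepA, split, ← stepC]; ring
  linarith [final]

lemma glasser (b : ℝ) (hb : 0 < b) :
    ∫ u in Ioi (0:ℝ), Real.exp (-(u^2 + b^2/u^2))
      = Real.sqrt Real.pi / 2 * Real.exp (-(2*b)) := by
  have hcong : ∀ u ∈ Ioi (0:ℝ), Real.exp (-(u^2 + b^2/u^2))
      = Real.exp (-(2*b)) * Real.exp (-(u - b/u)^2) := by
    intro u hu
    have hu0 : u ≠ 0 := (mem_Ioi.mp hu).ne'
    rw [← Real.exp_add]
    congr 1
    field_simp
    ring
  rw [setIntegral_congr_fun measurableSet_Ioi hcong, integral_const_mul, glasser_aux b hb]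
  ring

/-- The Lévy density with scale parameter `α > 0`:
`f_α(x) = (α / (2 √(π x³))) e^{-α²/(4x)}` for `x > 0`, and `0` for `x ≤ 0`. -/
noncomputable def levyDensity (α : ℝ) (x : ℝ) : ℝ :=
  if 0 < x then α / (2 * Real.sqrt (Real.pi * x ^ 3)) * Real.exp (-α ^ 2 / (4 * x)) else 0

/-- the Laplace transform of the Lévy density is `exp (-α √s)`. -/
theorem levyDensity_laplaceTransform (α : ℝ) (hα : 0 < α) (s : ℝ) (hs : 0 ≤ s) :
    ∫ x in Set.Ioi (0 : ℝ), Real.exp (-s * x) * levyDensity α x =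
      Real.exp (-α * Real.sqrt s) := by
  have hπ : (0:ℝ) < Real.sqrt Real.pi := Real.sqrt_pos.mpr Real.pi_pos
  -- change of variables x = α²/(4u²)
  have hderiv : ∀ u ∈ Ioi (0:ℝ), HasDerivWithinAt (fun u : ℝ => α^2/(4*u^2))
      (-(α^2/(2*u^3))) (Ioi 0) u := by
    intro u hu
    have hu0 : (0:ℝ) < u := mem_Ioi.mp hu
    have h4 : (4:ℝ)*u^2 ≠ 0 := by positivity
    have h0 := (((hasDerivAt_pow 2 u).const_mul (4:ℝ)).inv h4).const_mul (α^2)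
    have e : α^2 * (-(4*((2:ℕ)*u^(2-1))) / ((4*u^2)^2)) = -(α^2/(2*u^3)) := by
      field_simp
      ring
    have h : HasDerivAt (fun v : ℝ => α^2/(4*v^2)) (-(α^2/(2*u^3))) u := by
      simp only [div_eq_mul_inv]
      exact e ▸ h0
    exact h.hasDerivWithinAt
  have hinj : InjOn (fun u : ℝ => α^2/(4*u^2)) (Ioi 0) := by
    intro u hu v hv h
    simp only [mem_Ioi] at hu hv
    simp only at h
    rw [div_eq_div_iff (by positivity) (by positivity)] at h
    by_contra hne
    have hα2 : (0:ℝ) < α^2 := by positivity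
    have h2 : 4*v^2 = 4*u^2 := mul_left_cancel₀ hα2.ne' h
    rcases lt_or_gt_of_ne hne with hlt | hlt
    · nlinarith [mul_pos (sub_pos.mpr hlt) (add_pos hu hv)]
    · nlinarith [mul_pos (sub_pos.mpr hlt) (add_pos hv hu)]
  have key := integral_image_eq_integral_abs_deriv_smul (f := fun u : ℝ => α^2/(4*u^2))
    (f' := fun u : ℝ => -(α^2/(2*u^3))) measurableSet_Ioi hderiv hinj
    (fun x => Real.exp (-s*x) * levyDensity α x)
  rw [image_sq_inv α hα] at key
  simp only [smul_eq_mul] at key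
  rw [key]
  -- pointwise simplification
  have hcong : ∀ u ∈ Ioi (0:ℝ),
      |(-(α^2/(2*u^3)))| * (Real.exp (-s*(α^2/(4*u^2))) * levyDensity α (α^2/(4*u^2)))
      = 2/Real.sqrt Real.pi * Real.exp (-(u^2 + (α^2*s/4)/u^2)) := by
    intro u hu
    have hu0 : (0:ℝ) < u := mem_Ioi.mp hu
    have hx : (0:ℝ) < α^2/(4*u^2) := by positivity
    rw [levyDensity, if_pos hx]
    have habs : |(-(α^2/(2*u^3)))| = α^2/(2*u^3) := by
      rw [abs_neg, abs_of_pos (by positivity)]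
    have hsqrt : Real.sqrt (Real.pi * (α^2/(4*u^2))^3)
        = α^3/(8*u^3) * Real.sqrt Real.pi := by
      rw [show Real.pi * (α^2/(4*u^2))^3 = (α^3/(8*u^3))^2 * Real.pi by ring,
        Real.sqrt_mul (by positivity), Real.sqrt_sq (by positivity)]
    have hexp2 : -α^2/(4*(α^2/(4*u^2))) = -(u^2) := by
      field_simp
    rw [habs, hsqrt, hexp2]
    rw [show Real.exp (-s*(α^2/(4*u^2))) * (α/(2*(α^3/(8*u^3) * Real.sqrt Real.pi)) *
        Real.exp (-(u^2))) = α/(2*(α^3/(8*u^3) * Real.sqrt Real.pi)) *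
        (Real.exp (-s*(α^2/(4*u^2))) * Real.exp (-(u^2))) by ring]
    rw [← Real.exp_add]
    have e1 : α^2/(2*u^3) * (α/(2*(α^3/(8*u^3) * Real.sqrt Real.pi)))
        = 2/Real.sqrt Real.pi := by
      field_simp
      ring
    have e2 : -s*(α^2/(4*u^2)) + -(u^2) = -(u^2 + (α^2*s/4)/u^2) := by
      field_simp
      ring
    rw [← mul_assoc, e1, e2]
  rw [setIntegral_congr_fun measurableSet_Ioi hcong, integral_const_mul]
  rcases eq_or_lt_of_le hs with hs0 | hs0
  · subst hs0
    simp only [mul_zero, zero_mul, zero_div, add_zero, Real.sqrt_zero, mul_zero, neg_zero,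
      Real.exp_zero]
    have hg := integral_gaussian_Ioi 1
    simp only [neg_mul, one_mul, div_one] at hg
    rw [show (fun u : ℝ => Real.exp (-(u^2))) = fun u : ℝ => Real.exp (-u^2) by rfl]
    rw [hg]
    field_simp
  · set b := α * Real.sqrt s / 2 with hbdef
    have hbpos : 0 < b := by
      have : 0 < Real.sqrt s := Real.sqrt_pos.mpr hs0
      rw [hbdef]; positivity
    have hb2 : α^2*s/4 = b^2 := by
      rw [hbdef, div_pow, mul_pow, Real.sq_sqrt hs]
      ring
    rw [show (fun u : ℝ => Real.exp (-(u^2 + (α^2*s/4)/u^2)))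
        = fun u : ℝ => Real.exp (-(u^2 + b^2/u^2)) by rw [hb2]]
    rw [glasser b hbpos]
    have h2b : 2*b = α * Real.sqrt s := by rw [hbdef]; ring
    rw [h2b]
    rw [show -(α * Real.sqrt s) = -α * Real.sqrt s by ring]
    field_simp
end

section
/- For α, β > 0, the Laplace convolution of the Lévy densities f_α and f_β is the Lévy density f_{α+β}: for all x > 0, ∫₀^x f_α(u) f_β(x−u) du = f_{α+β}(x). -/
open MeasureTheory Real Filter Set intervalIntegral Topology



noncomputable def erfInt (t : ℝ) : ℝ := ∫ s in (0:ℝ)..t, Real.exp (-s^2)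

lemma erfInt_hasDerivAt (t : ℝ) : HasDerivAt erfInt (Real.exp (-t^2)) t := by
  have hc : Continuous fun s : ℝ => Real.exp (-s^2) := by continuity
  exact intervalIntegral.integral_hasDerivAt_right (hc.intervalIntegrable 0 t)
    (hc.stronglyMeasurableAtFilter _ _) hc.continuousAt

lemma integrable_exp_neg_sq : Integrable (fun s : ℝ => Real.exp (-s^2)) := by
  have := integrable_exp_neg_mul_sq (b := 1) one_pos
  simpa using this

lemma erfInt_tendsto_atTop : Tendsto erfInt atTop (𝓝 (Real.sqrt π / 2)) := by
  have h := MeasureTheory.intervalIntegral_tendsto_integral_Ioi (μ := volume)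
    (f := fun s : ℝ => Real.exp (-s^2)) 0 (integrable_exp_neg_sq.integrableOn) tendsto_id
  have h2 : ∫ s in Ioi (0:ℝ), Real.exp (-s^2) = Real.sqrt π / 2 := by
    have := integral_gaussian_Ioi 1
    simpa using this
  rw [h2] at h
  exact h

lemma erfInt_tendsto_atBot : Tendsto erfInt atBot (𝓝 (-(Real.sqrt π / 2))) := by
  have h := MeasureTheory.intervalIntegral_tendsto_integral_Iic (μ := volume)
    (f := fun s : ℝ => Real.exp (-s^2)) 0 (integrable_exp_neg_sq.integrableOn) tendsto_id
  have h2 : ∫ s in Iic (0:ℝ), Real.exp (-s^2) = Real.sqrt π / 2 := by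
    have : ∫ s in Iic (0:ℝ), Real.exp (-s^2) = ∫ s in Ioi (0:ℝ), Real.exp (-s^2) := by
      have := integral_comp_neg_Iic (0:ℝ) (fun s => Real.exp (-s^2))
      simp only [neg_zero, neg_sq] at this
      simpa using this.symm ▸ this
    rw [this]
    have := integral_gaussian_Ioi 1
    simpa using this
  rw [h2] at h
  have : erfInt = fun t => - ∫ s in t..(0:ℝ), Real.exp (-s^2) := by
    funext t; rw [erfInt, intervalIntegral.integral_symm]
  rw [this]
  simpa using h.neg


lemma levyDensity_nonneg (α x : ℝ) (hα : 0 ≤ α) : 0 ≤ levyDensity α x := by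
  unfold levyDensity
  split
  · positivity
  · exact le_refl 0

lemma levyDensity_measurable (α : ℝ) : Measurable (levyDensity α) := by
  unfold levyDensity
  apply Measurable.ite (measurableSet_lt measurable_const measurable_id)
  · fun_prop
  · fun_prop

/-- key pointwise bound: on `(-∞, x]` the Lévy density is bounded. -/
lemma sqrt_cube {y : ℝ} (hy : 0 ≤ y) : Real.sqrt (y ^ 3) = Real.sqrt y ^ 3 := by
  rw [pow_succ, Real.sqrt_mul (sq_nonneg y), Real.sqrt_sq hy, pow_succ, Real.sq_sqrt hy]

lemma levyDensity_le (α x : ℝ) (hα : 0 < α) (hx : 0 < x) (u : ℝ) (hu : u ≤ x) :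
    levyDensity α u ≤ 864 * Real.sqrt x ^ 3 / (Real.sqrt π * α ^ 5) := by
  have hM : 0 ≤ 864 * Real.sqrt x ^ 3 / (Real.sqrt π * α ^ 5) := by positivity
  unfold levyDensity
  split
  · rename_i hu0
    -- exp bound : exp (-α^2/(4u)) ≤ 1728 * u^3 / α^6
    have hs : 0 < α ^ 2 / (4 * u) := by positivity
    have hexp : Real.exp (-α ^ 2 / (4 * u)) ≤ 1728 * u ^ 3 / α ^ 6 := by
      have h1 : (α ^ 2 / (4 * u) / 3) ^ 3 ≤ Real.exp (α ^ 2 / (4 * u)) := by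
        have h2 : Real.exp (α ^ 2 / (4 * u)) = (Real.exp (α ^ 2 / (4 * u) / 3)) ^ 3 := by
          rw [← Real.exp_nat_mul]; ring_nf
        rw [h2]
        have h3 : α ^ 2 / (4 * u) / 3 ≤ Real.exp (α ^ 2 / (4 * u) / 3) :=
          le_trans (by linarith) (Real.add_one_le_exp _)
        exact pow_le_pow_left₀ (by positivity) h3 3
      have h4 : Real.exp (-α ^ 2 / (4 * u)) = (Real.exp (α ^ 2 / (4 * u)))⁻¹ := by
        rw [← Real.exp_neg]; ring_nf
      rw [h4]
      have h5 : ((α ^ 2 / (4 * u) / 3) ^ 3)⁻¹ = 1728 * u ^ 3 / α ^ 6 := by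
        field_simp; ring
      rw [← h5]
      exact inv_anti₀ (by positivity) h1
    have hsq : Real.sqrt (π * u ^ 3) = Real.sqrt π * Real.sqrt u ^ 3 := by
      rw [Real.sqrt_mul Real.pi_pos.le, sqrt_cube hu0.le]
    have hu3 : u ^ 3 = Real.sqrt u ^ 6 := by
      rw [← Real.sq_sqrt (pow_nonneg hu0.le 3), sqrt_cube hu0.le]; ring
    calc α / (2 * Real.sqrt (π * u ^ 3)) * Real.exp (-α ^ 2 / (4 * u))
        ≤ α / (2 * Real.sqrt (π * u ^ 3)) * (1728 * u ^ 3 / α ^ 6) := by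
          apply mul_le_mul_of_nonneg_left hexp (by positivity)
      _ = 864 * Real.sqrt u ^ 3 / (Real.sqrt π * α ^ 5) := by
          rw [hsq, hu3]
          have h6 : Real.sqrt u ≠ 0 := by positivity
          have h7 : Real.sqrt π ≠ 0 := by positivity
          field_simp
          ring
      _ ≤ 864 * Real.sqrt x ^ 3 / (Real.sqrt π * α ^ 5) := by
          have h8 : Real.sqrt u ≤ Real.sqrt x := Real.sqrt_le_sqrt hu
          gcongr
  · exact hM


noncomputable def gAux (α β x u : ℝ) : ℝ :=
  ((α + β) * u - α * x) / (2 * Real.sqrt (x * u * (x - u)))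

lemma gAux_hasDerivAt (α β x : ℝ) (hx : 0 < x) {u : ℝ} (hu : u ∈ Ioo 0 x) :
    HasDerivAt (gAux α β x)
      (x ^ 2 * (α * (x - u) + β * u) / (4 * Real.sqrt (x * u * (x - u)) ^ 3)) u := by
  obtain ⟨hu0, hux⟩ := hu
  have hq : 0 < x * u * (x - u) := by
    have : 0 < x - u := by linarith
    positivity
  set t := Real.sqrt (x * u * (x - u)) with hts
  have ht : 0 < t := Real.sqrt_pos.mpr hq
  have ht2 : t ^ 2 = x * u * (x - u) := Real.sq_sqrt hq.le
  have hqd : HasDerivAt (fun u : ℝ => x * u * (x - u)) (x * (x - 2 * u)) u := by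
    have h1 : HasDerivAt (fun u : ℝ => x * u) x u := by
      simpa using (hasDerivAt_id u).const_mul x
    have h2 : HasDerivAt (fun u : ℝ => x - u) (-1) u := by
      exact (hasDerivAt_id' u).const_sub x
    have := h1.mul h2
    exact this.congr_deriv (by ring)
  have hSd : HasDerivAt (fun u : ℝ => Real.sqrt (x * u * (x - u)))
      (x * (x - 2 * u) / (2 * t)) u := hqd.sqrt hq.ne'
  have hN : HasDerivAt (fun u : ℝ => (α + β) * u - α * x) (α + β) u := by
    simpa using ((hasDerivAt_id' u).const_mul (α + β)).sub_const (α * x)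
  have hD : HasDerivAt (fun u : ℝ => 2 * Real.sqrt (x * u * (x - u)))
      (2 * (x * (x - 2 * u) / (2 * t))) u := hSd.const_mul 2
  have hne : 2 * t ≠ 0 := by positivity
  have := hN.div hD (by rw [← hts]; exact hne)
  refine this.congr_deriv ?_
  rw [← hts]
  field_simp
  ring_nf
  linear_combination 8 * (α + β) * ht2

lemma gAux_sq (α β x : ℝ) (hx : 0 < x) {u : ℝ} (hu : u ∈ Ioo 0 x) :
    (gAux α β x u) ^ 2 = ((α + β) * u - α * x) ^ 2 / (4 * (x * u * (x - u))) := by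
  obtain ⟨hu0, hux⟩ := hu
  have hq : 0 < x * u * (x - u) := by
    have : 0 < x - u := by linarith
    positivity
  rw [gAux, div_pow, mul_pow, Real.sq_sqrt hq.le]
  ring_nf

lemma gAux_tendsto_zero (α β x : ℝ) (hx : 0 < x) (hax : 0 < α * x) :
    Tendsto (gAux α β x) (𝓝[>] 0) atBot := by
  have hS : Tendsto (fun u : ℝ => 2 * Real.sqrt (x * u * (x - u))) (𝓝[>] 0) (𝓝[>] 0) := by
    rw [tendsto_nhdsWithin_iff]
    constructor
    · have hcont : Continuous fun u : ℝ => 2 * Real.sqrt (x * u * (x - u)) := by continuity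
      have := hcont.tendsto 0
      simp only [mul_zero, zero_mul, Real.sqrt_zero] at this
      simpa using this.mono_left nhdsWithin_le_nhds
    · filter_upwards [Ioo_mem_nhdsGT hx] with u hu
      have : 0 < x * u * (x - u) := by
        have h1 := hu.1; have h2 := hu.2
        have : 0 < x - u := by linarith
        positivity
      have := Real.sqrt_pos.mpr this
      simp only [mem_Ioi]
      positivity
  have hinv : Tendsto (fun u : ℝ => (2 * Real.sqrt (x * u * (x - u)))⁻¹) (𝓝[>] 0) atTop :=
    hS.inv_tendsto_nhdsGT_zero
  have hN : Tendsto (fun u : ℝ => (α + β) * u - α * x) (𝓝[>] 0) (𝓝 (-(α * x))) := by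
    have : Continuous fun u : ℝ => (α + β) * u - α * x := by continuity
    have := this.tendsto 0
    simp only [mul_zero, zero_sub] at this
    exact this.mono_left nhdsWithin_le_nhds
  have h2 := hN.neg_mul_atTop (by linarith) hinv
  exact h2.congr fun u => (div_eq_mul_inv _ _).symm

lemma sqrtDen_tendsto_x (x : ℝ) (hx : 0 < x) :
    Tendsto (fun u : ℝ => 2 * Real.sqrt (x * u * (x - u))) (𝓝[<] x) (𝓝[>] 0) := by
  rw [tendsto_nhdsWithin_iff]
  constructor
  · have hcont : Continuous fun u : ℝ => 2 * Real.sqrt (x * u * (x - u)) := by continuity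
    have := hcont.tendsto x
    simp only [sub_self, mul_zero, Real.sqrt_zero] at this
    simpa using this.mono_left nhdsWithin_le_nhds
  · filter_upwards [Ioo_mem_nhdsLT hx] with u hu
    have h3 : 0 < x * u * (x - u) := by
      have h1 := hu.1; have h2 := hu.2
      have : 0 < x - u := by linarith
      positivity
    have := Real.sqrt_pos.mpr h3
    simp only [mem_Ioi]
    positivity

lemma gAux_numer_tendsto_x (α β x : ℝ) :
    Tendsto (fun u : ℝ => (α + β) * u - α * x) (𝓝[<] x) (𝓝 (β * x)) := by
  have hc : Continuous fun u : ℝ => (α + β) * u - α * x := by continuity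
  have := (hc.tendsto x).mono_left (nhdsWithin_le_nhds (s := Iio x))
  have he : (α + β) * x - α * x = β * x := by ring
  rwa [he] at this

lemma gAux_tendsto_x_atTop (α β x : ℝ) (hx : 0 < x) (hb : 0 < β * x) :
    Tendsto (gAux α β x) (𝓝[<] x) atTop := by
  have hinv := (sqrtDen_tendsto_x x hx).inv_tendsto_nhdsGT_zero
  have h2 := (gAux_numer_tendsto_x α β x).pos_mul_atTop hb hinv
  exact h2.congr fun u => (div_eq_mul_inv _ _).symm

lemma gAux_tendsto_x_atBot (α β x : ℝ) (hx : 0 < x) (hb : β * x < 0) :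
    Tendsto (gAux α β x) (𝓝[<] x) atBot := by
  have hinv := (sqrtDen_tendsto_x x hx).inv_tendsto_nhdsGT_zero
  have h2 := (gAux_numer_tendsto_x α β x).neg_mul_atTop hb hinv
  exact h2.congr fun u => (div_eq_mul_inv _ _).symm


/-- the Laplace convolution of the Lévy densities `f_α` and `f_β` is the
Lévy density `f_{α+β}`. -/
theorem levyDensity_laplaceConv (α β : ℝ) (hα : 0 < α) (hβ : 0 < β) (x : ℝ) (hx : 0 < x) :
    ∫ u in (0 : ℝ)..x, levyDensity α u * levyDensity β (x - u) =
      levyDensity (α + β) x := by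
  set C₁ : ℝ := (α + β) * Real.exp (-((α + β) ^ 2 / (4 * x))) / (2 * π * Real.sqrt (x ^ 3))
    with hC₁
  set C₂ : ℝ := (β - α) * Real.exp (α * β / x - (α + β) ^ 2 / (4 * x)) /
    (2 * π * Real.sqrt (x ^ 3)) with hC₂
  set G : ℝ → ℝ := fun u =>
    C₁ * erfInt (gAux α β x u) + C₂ * erfInt (gAux α (-β) x u) with hG
  -- the key derivative computation
  have hfd : ∀ u ∈ Ioo 0 x, HasDerivAt G (levyDensity α u * levyDensity β (x - u)) u := by
    intro u hu
    obtain ⟨hu0, hux⟩ := hu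
    have hxu : 0 < x - u := by linarith
    have hgd := gAux_hasDerivAt α β x hx ⟨hu0, hux⟩
    have hhd := gAux_hasDerivAt α (-β) x hx ⟨hu0, hux⟩
    have d1 : HasDerivAt (fun u => erfInt (gAux α β x u))
        (Real.exp (-(gAux α β x u) ^ 2) *
          (x ^ 2 * (α * (x - u) + β * u) / (4 * Real.sqrt (x * u * (x - u)) ^ 3))) u :=
      (erfInt_hasDerivAt _).comp u hgd
    have d2 : HasDerivAt (fun u => erfInt (gAux α (-β) x u))
        (Real.exp (-(gAux α (-β) x u) ^ 2) *
          (x ^ 2 * (α * (x - u) + -β * u) / (4 * Real.sqrt (x * u * (x - u)) ^ 3))) u :=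
      (erfInt_hasDerivAt _).comp u hhd
    have hGd := (d1.const_mul C₁).add (d2.const_mul C₂)
    refine hGd.congr_deriv (Eq.symm ?_)
    -- now the value equality
    have hg2 : (gAux α β x u) ^ 2
        = α ^ 2 / (4 * u) + β ^ 2 / (4 * (x - u)) - (α + β) ^ 2 / (4 * x) := by
      rw [gAux_sq α β x hx ⟨hu0, hux⟩]
      field_simp
      ring
    have hh2 : (gAux α (-β) x u) ^ 2
        = α ^ 2 / (4 * u) + β ^ 2 / (4 * (x - u)) - (α + β) ^ 2 / (4 * x) + α * β / x := by
      rw [gAux_sq α (-β) x hx ⟨hu0, hux⟩]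
      field_simp
      ring
    rw [levyDensity, levyDensity, if_pos hu0, if_pos hxu, hC₁, hC₂]
    set A := Real.exp (-α ^ 2 / (4 * u)) with hA
    set B := Real.exp (-β ^ 2 / (4 * (x - u))) with hB
    have E1 : Real.exp (-((α + β) ^ 2 / (4 * x))) * Real.exp (-(gAux α β x u) ^ 2)
        = A * B := by
      rw [hA, hB, ← Real.exp_add, ← Real.exp_add]
      congr 1
      rw [hg2]
      ring
    have E2 : Real.exp (α * β / x - (α + β) ^ 2 / (4 * x)) *
        Real.exp (-(gAux α (-β) x u) ^ 2) = A * B := by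
      rw [hA, hB, ← Real.exp_add, ← Real.exp_add]
      congr 1
      rw [hh2]
      ring
    have hsπu : Real.sqrt (π * u ^ 3) = Real.sqrt π * Real.sqrt u ^ 3 := by
      rw [Real.sqrt_mul pi_pos.le, sqrt_cube hu0.le]
    have hsπxu : Real.sqrt (π * (x - u) ^ 3) = Real.sqrt π * Real.sqrt (x - u) ^ 3 := by
      rw [Real.sqrt_mul pi_pos.le, sqrt_cube hxu.le]
    have hsx3 : Real.sqrt (x ^ 3) = Real.sqrt x ^ 3 := sqrt_cube hx.le
    have hst : Real.sqrt (x * u * (x - u))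
        = Real.sqrt x * Real.sqrt u * Real.sqrt (x - u) := by
      rw [Real.sqrt_mul (by positivity : (0:ℝ) ≤ x * u), Real.sqrt_mul hx.le]
    rw [hsπu, hsπxu, hsx3, hst]
    set P := Real.exp (-((α + β) ^ 2 / (4 * x))) with hP
    set Q := Real.exp (-(gAux α β x u) ^ 2) with hQ
    set R := Real.exp (α * β / x - (α + β) ^ 2 / (4 * x)) with hR
    set S := Real.exp (-(gAux α (-β) x u) ^ 2) with hS
    set sp := Real.sqrt π with hsp
    set a := Real.sqrt x with ha
    set b := Real.sqrt u with hb
    set d := Real.sqrt (x - u) with hd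
    have hsp0 : 0 < sp := by rw [hsp]; positivity
    have ha0 : 0 < a := by rw [ha]; exact Real.sqrt_pos.mpr hx
    have hb0 : 0 < b := by rw [hb]; exact Real.sqrt_pos.mpr hu0
    have hd0 : 0 < d := by rw [hd]; exact Real.sqrt_pos.mpr hxu
    have hd2 : x - u = d ^ 2 := by rw [hd]; exact (Real.sq_sqrt hxu.le).symm
    have hb2 : u = b ^ 2 := by rw [hb]; exact (Real.sq_sqrt hu0.le).symm
    have ha2 : x = a ^ 2 := by rw [ha]; exact (Real.sq_sqrt hx.le).symm
    have hp2 : π = sp ^ 2 := by rw [hsp]; exact (Real.sq_sqrt pi_pos.le).symm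
    have hrel : a ^ 2 = b ^ 2 + d ^ 2 := by rw [← ha2, ← hb2, ← hd2]; ring
    rw [hd2, hb2, ha2, hp2]
    field_simp
    linear_combination (-2 * (α * β * d ^ 2 + α * β * b ^ 2 + α ^ 2 * d ^ 2 + β ^ 2 * b ^ 2)) * E1
      + (2 * (α ^ 2 * d ^ 2 + β ^ 2 * b ^ 2 - α * β * d ^ 2 - α * β * b ^ 2)) * E2
      + (4 * α * β * A * B) * hrel
  -- integrability
  have hint : IntervalIntegrable (fun u => levyDensity α u * levyDensity β (x - u))
      volume 0 x := by
    rw [intervalIntegrable_iff_integrableOn_Ioo_of_le hx.le]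
    refine Measure.integrableOn_of_bounded
      (M := (864 * Real.sqrt x ^ 3 / (Real.sqrt π * α ^ 5)) *
            (864 * Real.sqrt x ^ 3 / (Real.sqrt π * β ^ 5)))
      measure_Ioo_lt_top.ne
      (((levyDensity_measurable α).mul ((levyDensity_measurable β).comp
        (measurable_const.sub measurable_id))).aestronglyMeasurable) ?_
    filter_upwards [ae_restrict_mem measurableSet_Ioo] with u hu
    have h1 : 0 ≤ levyDensity α u := levyDensity_nonneg α u hα.le
    have h2 : 0 ≤ levyDensity β (x - u) := levyDensity_nonneg β (x - u) hβ.le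
    rw [Real.norm_eq_abs, abs_of_nonneg (mul_nonneg h1 h2)]
    exact mul_le_mul (levyDensity_le α x hα hx u hu.2.le)
      (levyDensity_le β x hβ hx (x - u) (by linarith [hu.1])) h2 (by positivity)
  -- endpoint limits
  have hG0 : Tendsto G (𝓝[>] (0:ℝ))
      (𝓝 (C₁ * -(Real.sqrt π / 2) + C₂ * -(Real.sqrt π / 2))) := by
    have t1 := (erfInt_tendsto_atBot.comp (gAux_tendsto_zero α β x hx (by positivity))).const_mul C₁
    have t2 := (erfInt_tendsto_atBot.comp
      (gAux_tendsto_zero α (-β) x hx (by positivity))).const_mul C₂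
    have := t1.add t2
    simpa [Function.comp] using this
  have hGx : Tendsto G (𝓝[<] x)
      (𝓝 (C₁ * (Real.sqrt π / 2) + C₂ * -(Real.sqrt π / 2))) := by
    have t1 := (erfInt_tendsto_atTop.comp
      (gAux_tendsto_x_atTop α β x hx (by positivity))).const_mul C₁
    have t2 := (erfInt_tendsto_atBot.comp
      (gAux_tendsto_x_atBot α (-β) x hx (by nlinarith))).const_mul C₂
    have := t1.add t2
    simpa [Function.comp] using this
  rw [intervalIntegral.integral_eq_sub_of_hasDerivAt_of_tendsto hx hfd hint hG0 hGx]
  -- final constant computation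
  have hπ : (0:ℝ) < π := Real.pi_pos
  have hsp : Real.sqrt π ^ 2 = π := Real.sq_sqrt hπ.le
  have hsx : (0:ℝ) < Real.sqrt (x ^ 3) := Real.sqrt_pos.mpr (by positivity)
  rw [levyDensity, if_pos hx, Real.sqrt_mul hπ.le, hC₁, hC₂]
  have he : -(α + β) ^ 2 / (4 * x) = -((α + β) ^ 2 / (4 * x)) := by ring
  rw [he]
  obtain ⟨s, hs⟩ : ∃ s, s = Real.sqrt π := ⟨_, rfl⟩
  have hs0 : s ≠ 0 := by rw [hs]; positivity
  have hsx' : Real.sqrt (x ^ 3) ≠ 0 := hsx.ne'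
  rw [← hs] at hsp ⊢
  rw [← hsp]
  field_simp
  ring
end

section
/- For α, β > 0 and every p with 0 < p < 1, the integral identity ∫₀^∞ z · f_α(z p) · f_β(z (1−p)) dz = (1 / (π √(p(1−p)))) · (αβ / (α² (1−p) + β² p)) holds, where f_α and f_β are Lévy densities. -/
open MeasureTheory Real

lemma integral_exp_neg_div_sq {c : ℝ} (hc : 0 < c) :
    ∫ z in Set.Ioi (0 : ℝ), Real.exp (-c / z) / z ^ 2 = 1 / c := by
  set g : ℝ → ℝ := fun z => if 0 < z then Real.exp (-c / z) / c else 0 with hg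
  have hderiv : ∀ z ∈ Set.Ioi (0 : ℝ),
      HasDerivAt g (Real.exp (-c / z) / z ^ 2) z := by
    intro z hz
    have hz' : (0 : ℝ) < z := hz
    have h1 : HasDerivAt (fun z : ℝ => -c / z) (c / z ^ 2) z := by
      have := (hasDerivAt_inv (ne_of_gt hz')).const_mul (-c)
      have heq : -c * -(z ^ 2)⁻¹ = c / z ^ 2 := by
        field_simp
      rw [heq] at this
      apply this.congr_of_eventuallyEq
      filter_upwards with x
      rw [div_eq_mul_inv]
    have h2 : HasDerivAt (fun z : ℝ => Real.exp (-c / z) / c)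
        (Real.exp (-c / z) * (c / z ^ 2) / c) z := (h1.exp).div_const c
    have h3 : Real.exp (-c / z) * (c / z ^ 2) / c = Real.exp (-c / z) / z ^ 2 := by
      field_simp
    rw [h3] at h2
    apply h2.congr_of_eventuallyEq
    filter_upwards [Ioi_mem_nhds hz'] with x hx
    simp [hg, Set.mem_Ioi.mp hx]
  have hlimIoi : Filter.Tendsto g (nhdsWithin 0 (Set.Ioi 0)) (nhds 0) := by
    have h1 : Filter.Tendsto (fun z : ℝ => -c / z) (nhdsWithin 0 (Set.Ioi 0))
        Filter.atBot := by
      have h2 := Filter.Tendsto.const_mul_atTop hc (tendsto_inv_nhdsGT_zero (𝕜 := ℝ))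
      have h3 := Filter.tendsto_neg_atTop_atBot.comp h2
      apply h3.congr
      intro x
      simp [Function.comp, div_eq_mul_inv, neg_div]
    have h4 := (Real.tendsto_exp_atBot).comp h1
    have h5 := h4.div_const c
    simp only [Function.comp, zero_div] at h5
    apply h5.congr'
    filter_upwards [self_mem_nhdsWithin] with x hx
    simp [hg, Set.mem_Ioi.mp hx]
  have hcont : ContinuousWithinAt g (Set.Ici 0) 0 := by
    have h0 : g 0 = 0 := by simp [hg]
    rw [ContinuousWithinAt, h0]
    have hIci : Set.Ici (0 : ℝ) = insert 0 (Set.Ioi 0) := by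
      ext x; simp [Set.mem_Ici, Set.mem_Ioi, le_iff_lt_or_eq, or_comm, eq_comm]
    rw [hIci, nhdsWithin_insert, Filter.tendsto_sup]
    refine ⟨?_, hlimIoi⟩
    have := tendsto_pure_nhds g 0
    rwa [h0] at this
  have htop : Filter.Tendsto g Filter.atTop (nhds (1 / c)) := by
    have h1 : Filter.Tendsto (fun z : ℝ => -c / z) Filter.atTop (nhds 0) := by
      have := (tendsto_inv_atTop_zero (𝕜 := ℝ)).const_mul (-c)
      simpa [div_eq_mul_inv] using this
    have h2 := ((Real.continuous_exp.tendsto 0).comp h1).div_const c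
    simp only [Function.comp, Real.exp_zero] at h2
    apply h2.congr'
    filter_upwards [Filter.Ioi_mem_atTop (0 : ℝ)] with x hx
    simp [hg, Set.mem_Ioi.mp hx]
  have hpos : ∀ z ∈ Set.Ioi (0 : ℝ), 0 ≤ Real.exp (-c / z) / z ^ 2 := by
    intro z _; positivity
  have := integral_Ioi_of_hasDerivAt_of_nonneg hcont hderiv hpos htop
  rw [this]
  simp [hg]

/-- for Lévy densities,
`∫₀^∞ z f_α(z p) f_β(z (1-p)) dz = (1/(π √(p(1-p)))) · (αβ / (α²(1-p) + β²p))`. -/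
theorem levyDensity_ratio_integral (α β : ℝ) (hα : 0 < α) (hβ : 0 < β)
    (p : ℝ) (hp₀ : 0 < p) (hp₁ : p < 1) :
    ∫ z in Set.Ioi (0 : ℝ), z * levyDensity α (z * p) * levyDensity β (z * (1 - p)) =
      1 / (Real.pi * Real.sqrt (p * (1 - p))) *
        (α * β / (α ^ 2 * (1 - p) + β ^ 2 * p)) := by
  have hq : 0 < 1 - p := by linarith
  set q := 1 - p with hqdef
  set c : ℝ := (α ^ 2 * q + β ^ 2 * p) / (4 * (p * q)) with hc
  have hpq : 0 < p * q := mul_pos hp₀ hq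
  have hnum : 0 < α ^ 2 * q + β ^ 2 * p := by positivity
  have hcpos : 0 < c := by positivity
  have hπ : (0 : ℝ) < Real.pi := Real.pi_pos
  have hsqrtpq : 0 < Real.sqrt (p * q) := Real.sqrt_pos.mpr hpq
  set K : ℝ := α * β / (4 * Real.pi * (p * q) * Real.sqrt (p * q)) with hK
  have key : ∀ z ∈ Set.Ioi (0 : ℝ),
      z * levyDensity α (z * p) * levyDensity β (z * q) =
        K * (Real.exp (-c / z) / z ^ 2) := by
    intro z hz
    have hz' : (0 : ℝ) < z := hz
    have hzp : 0 < z * p := mul_pos hz' hp₀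
    have hzq : 0 < z * q := mul_pos hz' hq
    rw [levyDensity, levyDensity, if_pos hzp, if_pos hzq]
    set S1 := Real.sqrt (Real.pi * (z * p) ^ 3) with hS1
    set S2 := Real.sqrt (Real.pi * (z * q) ^ 3) with hS2
    set E1 := Real.exp (-α ^ 2 / (4 * (z * p))) with hE1
    set E2 := Real.exp (-β ^ 2 / (4 * (z * q))) with hE2
    have hS : S1 * S2 = Real.pi * z ^ 3 * (p * q) * Real.sqrt (p * q) := by
      rw [hS1, hS2, ← Real.sqrt_mul (by positivity)]
      have h : Real.pi * (z * p) ^ 3 * (Real.pi * (z * q) ^ 3) =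
          (Real.pi * z ^ 3 * (p * q)) ^ 2 * (p * q) := by ring
      rw [h, Real.sqrt_mul (sq_nonneg _), Real.sqrt_sq (by positivity)]
    have hexp : E1 * E2 = Real.exp (-c / z) := by
      rw [hE1, hE2, ← Real.exp_add]
      congr 1
      rw [hc]
      field_simp
      ring
    have hS1pos : 0 < S1 := Real.sqrt_pos.mpr (by positivity)
    have hS2pos : 0 < S2 := Real.sqrt_pos.mpr (by positivity)
    have step1 : z * (α / (2 * S1) * E1) * (β / (2 * S2) * E2) =
        α * β * z / (4 * (S1 * S2)) * (E1 * E2) := by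
      field_simp
      ring
    rw [step1, hS, hexp, hK]
    field_simp
  rw [setIntegral_congr_fun measurableSet_Ioi key, integral_const_mul,
    integral_exp_neg_div_sq hcpos, hK, hc]
  field_simp
end
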